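/- Let R be a commutative noetherian ring, M a finitely generated R-module, and Ω M a syzygy of M (i.e., there is an exact sequence 0 → Ω M → P → M → 0 with P finitely generated projective). Then the stable annihilator of M is contained in the stable annihilator of Ω M. -/

import Mathlib

/-- `a` lies in the stable annihilator of `M`: multiplication by `a` on `M` factors
through a finitely generated projective `R`-module. -/
def StablyAnn (R : Type) [CommRing R] (M : Type) [AddCommGroup M] [Module R M] (a : R) : Prop :=
  ∃ (P : Type) (_ : AddCommGroup P) (_ : Module R P),
    Module.Finite R P ∧ Module.Projective R P ∧
    ∃ (f : M →ₗ[R] P) (g : P →ₗ[R] M), g ∘ₗ f = a • (LinearMap.id : M →ₗ[R] M)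

/-- The stable annihilator of M is contained in the stable annihilator of a syzygy of M. -/
theorem stablyAnn_le_stablyAnn_syzygy (R : Type) [CommRing R] [IsNoetherianRing R]
    (K P M : Type) [AddCommGroup K] [Module R K] [Module.Finite R K]
    [AddCommGroup P] [Module R P] [Module.Finite R P] [Module.Projective R P]
    [AddCommGroup M] [Module R M] [Module.Finite R M]
    (f : K →ₗ[R] P) (g : P →ₗ[R] M) (hf : Function.Injective f) (hg : Function.Surjective g)
    (hfg : LinearMap.range f = LinearMap.ker g) :
    ∀ a : R, StablyAnn R M a → StablyAnn R K a := by
  rintro a ⟨Q, _, _, _, hQproj, s, t, hst⟩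
  obtain ⟨u, hu⟩ := Module.projective_lifting_property g t hg
  set φ : P →ₗ[R] P := a • LinearMap.id - u ∘ₗ s ∘ₗ g with hφ
  have hgf : ∀ k : K, g (f k) = 0 := by
    intro k
    have : f k ∈ LinearMap.ker g := hfg ▸ LinearMap.mem_range_self f k
    exact this
  have hrange : ∀ x : P, φ x ∈ LinearMap.range f := by
    intro x
    rw [hfg, LinearMap.mem_ker]
    have h1 : g (u (s (g x))) = t (s (g x)) := by
      rw [← hu]; rfl
    have h2 : t (s (g x)) = a • g x := by
      have := congrArg (fun ψ => ψ (g x)) hst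
      simpa using this
    simp [hφ, h1, h2]
  let e := LinearEquiv.ofInjective f hf
  let h : P →ₗ[R] K := e.symm.toLinearMap ∘ₗ LinearMap.codRestrict _ φ hrange
  have hfh : ∀ x : P, f (h x) = φ x := by
    intro x
    have h0 : h x = e.symm ⟨φ x, hrange x⟩ := rfl
    rw [h0, ← LinearEquiv.ofInjective_apply f (h := hf), e.apply_symm_apply]
  refine ⟨P, inferInstance, inferInstance, inferInstance, inferInstance, f, h, ?_⟩
  ext k
  apply hf
  have : f (h (f k)) = φ (f k) := hfh (f k)
  simp [this, hφ, hgf k]
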